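/- Let I be a proper ideal of R = C^∞(M,ℝ) of finite codimension such that the quotient ℝ-algebra R/I has no idempotent elements other than 0 and 1 (for instance, R/I is a Weil algebra, i.e., a direct sum of ℝ and a nilpotent ideal). Then spec(I) consists of exactly one point. -/

import Mathlib

open scoped Manifold
open Module Filter Topology

noncomputable section

/-- The ℝ-algebra of smooth real-valued functions on a manifold `M` modelled on `ℝ^m`. -/
abbrev SmoothFns (m : ℕ) (M : Type*) [TopologicalSpace M]
    [ChartedSpace (EuclideanSpace ℝ (Fin m)) M] : Type _ :=
  C^(⊤ : ℕ∞)⟮𝓡 m, M; 𝓘(ℝ, ℝ), ℝ⟯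

variable {m : ℕ} {M : Type*} [TopologicalSpace M] [T2Space M] [SecondCountableTopology M]
  [ChartedSpace (EuclideanSpace ℝ (Fin m)) M] [IsManifold (𝓡 m) (⊤ : ℕ∞) M]

/-- The ideal `𝔪ₓ` of smooth functions vanishing at the point `x`. -/
def mIdeal (x : M) : Ideal (SmoothFns m M) where
  carrier := {f | f x = 0}
  add_mem' := by intro f g hf hg; simp_all
  zero_mem' := by simp
  smul_mem' := by intro c f hf; simp_all

/-- The ideal `𝔫ₓ` of smooth functions vanishing on some neighbourhood of the point `x`. -/
def nIdeal (x : M) : Ideal (SmoothFns m M) where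
  carrier := {f | ∀ᶠ y in 𝓝 x, f y = 0}
  add_mem' := by
    intro f g hf hg
    filter_upwards [hf, hg] with y h1 h2
    simp [h1, h2]
  zero_mem' := by filter_upwards with y; simp
  smul_mem' := by
    intro c f hf
    filter_upwards [hf] with y h
    simp [h]

/-- The spectrum of an ideal: the set of common zeros of its elements. -/
def idealSpec (I : Ideal (SmoothFns m M)) : Set M :=
  {x : M | ∀ f ∈ I, f x = 0}

/-- Evaluation at a point, as an `ℝ`-algebra homomorphism. -/
def myEvalAlgHom (x : M) : SmoothFns m M →ₐ[ℝ] ℝ where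
  toFun f := f x
  map_one' := rfl
  map_mul' _ _ := rfl
  map_zero' := rfl
  map_add' _ _ := rfl
  commutes' _ := rfl

@[simp] lemma myEvalAlgHom_apply (x : M) (f : SmoothFns m M) :
    myEvalAlgHom x f = f x := rfl

/-- There is a smooth "exhaustion function": all sublevel sets are compact. -/
lemma my_exists_exhaustion :
    ∃ p : SmoothFns m M, ∀ c : ℝ, IsCompact {z : M | p z ≤ c} := by
  haveI : LocallyCompactSpace M :=
    ChartedSpace.locallyCompactSpace (EuclideanSpace ℝ (Fin m)) M
  haveI : SigmaCompactSpace M := inferInstance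
  set K : CompactExhaustion M := CompactExhaustion.choice M
  obtain ⟨p, hp⟩ := exists_contMDiffMap_forall_mem_convex_of_local_const (𝓡 m)
    (t := fun x => Set.Ioi ((K.find x : ℝ)))
    (fun _ => convex_Ioi _)
    (fun x => by
      refine ⟨(K.find x : ℝ) + 2, ?_⟩
      have hmem : x ∈ interior (K (K.find x + 1)) :=
        K.subset_interior_succ _ (K.mem_find x)
      filter_upwards [isOpen_interior.mem_nhds hmem] with y hy
      have h1 : K.find y ≤ K.find x + 1 :=
        K.mem_iff_find_le.1 (interior_subset hy)
      have h2 : (K.find y : ℝ) ≤ (K.find x : ℝ) + 1 := by exact_mod_cast h1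
      simp only [Set.mem_Ioi]
      linarith)
  refine ⟨p, fun c => ?_⟩
  obtain ⟨n, hn⟩ := exists_nat_ge c
  have hsub : {z : M | p z ≤ c} ⊆ K n := by
    intro z hz
    have h1 : (K.find z : ℝ) < p z := hp z
    have h2 : (K.find z : ℝ) ≤ (n : ℝ) := by
      have := hz.out
      linarith
    have h3 : K.find z ≤ n := by exact_mod_cast h2
    exact K.mem_iff_find_le.2 h3
  have hcl : IsClosed {z : M | p z ≤ c} :=
    isClosed_le p.contMDiff.continuous continuous_const
  exact (K.isCompact n).of_isClosed_subset hcl hsub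

/-- A positive element of an ideal forces the ideal to be everything. -/
lemma my_ideal_eq_top_of_pos (I : Ideal (SmoothFns m M)) (h : SmoothFns m M)
    (hmem : h ∈ I) (hpos : ∀ w, 0 < h w) : I = ⊤ := by
  have hne : ∀ w, h w ≠ 0 := fun w => ne_of_gt (hpos w)
  set hinv : SmoothFns m M := ⟨fun w => (h w)⁻¹, h.contMDiff.inv₀ hne⟩
  have hmul : h * hinv = 1 := by
    ext w
    exact mul_inv_cancel₀ (hne w)
  exact Ideal.eq_top_of_isUnit_mem I hmem (IsUnit.of_mul_eq_one _ hmul)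

/-- The spectrum of a proper ideal of finite codimension is nonempty. -/
lemma my_spec_nonempty (I : Ideal (SmoothFns m M)) (hI : I ≠ ⊤)
    (hfd : FiniteDimensional ℝ (SmoothFns m M ⧸ I)) :
    (idealSpec I).Nonempty := by
  by_contra hne
  rw [Set.not_nonempty_iff_eq_empty] at hne
  -- every point admits an element of `I` not vanishing there
  have hpt : ∀ z : M, ∃ g, g ∈ I ∧ g z ≠ 0 := by
    intro z
    by_contra hz
    push_neg at hz
    have : z ∈ idealSpec I := fun f hf => hz f hf
    simp [hne] at this
  choose g hgI hgz using hpt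
  obtain ⟨p, hp⟩ := my_exists_exhaustion (m := m) (M := M)
  -- the powers of the image of `p` in the quotient are linearly dependent
  set π : SmoothFns m M →ₐ[ℝ] (SmoothFns m M ⧸ I) := Ideal.Quotient.mkₐ ℝ I
  set n : ℕ := finrank ℝ (SmoothFns m M ⧸ I)
  have hdep : ¬ LinearIndependent ℝ (fun i : Fin (n + 1) => (π p) ^ (i : ℕ)) := by
    intro hli
    have := hli.fintype_card_le_finrank
    simp [n] at this
  rw [Fintype.not_linearIndependent_iff] at hdep
  obtain ⟨c, hc, i0, hi0⟩ := hdep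
  -- the corresponding polynomial
  set q : Polynomial ℝ := ∑ i : Fin (n + 1), Polynomial.C (c i) * Polynomial.X ^ (i : ℕ)
  have hq0 : q ≠ 0 := by
    intro h0
    apply hi0
    have : q.coeff (i0 : ℕ) = c i0 := by
      simp only [q, Polynomial.finset_sum_coeff, Polynomial.coeff_C_mul,
        Polynomial.coeff_X_pow]
      rw [Finset.sum_eq_single i0]
      · simp
      · intro b _ hb
        have hne2 : (i0 : ℕ) ≠ (b : ℕ) := fun h => hb (Fin.ext h).symm
        rw [if_neg hne2, mul_zero]
      · simp
    rw [h0] at this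
    simpa using this.symm
  set F : SmoothFns m M := Polynomial.aeval p q
  have hFI : F ∈ I := by
    have hπF : π F = 0 := by
      have : π F = Polynomial.aeval (π p) q := (Polynomial.aeval_algHom_apply π p q).symm
      rw [this]
      simp only [q, map_sum, map_mul, Polynomial.aeval_C, map_pow, Polynomial.aeval_X]
      have := hc
      calc ∑ i : Fin (n+1), (algebraMap ℝ _) (c i) * (π p) ^ (i : ℕ)
          = ∑ i : Fin (n+1), c i • (π p) ^ (i : ℕ) := by
            exact Finset.sum_congr rfl fun i _ => (Algebra.smul_def _ _).symm
        _ = 0 := hc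
    exact (Ideal.Quotient.eq_zero_iff_mem).1 hπF
  have hFz : ∀ z : M, F z = Polynomial.eval (p z) q := by
    intro z
    have : myEvalAlgHom z F = Polynomial.aeval (myEvalAlgHom z p) q :=
      (Polynomial.aeval_algHom_apply (myEvalAlgHom z) p q).symm
    simpa [Polynomial.coe_aeval_eq_eval] using this
  -- the zero set of `F` is compact
  obtain ⟨C, hC⟩ := (Polynomial.finite_setOf_isRoot hq0).bddAbove
  have hZsub : {z : M | F z = 0} ⊆ {z : M | p z ≤ C} := by
    intro z hz
    have : Polynomial.IsRoot q (p z) := by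
      have := hz.out
      rwa [hFz z] at this
    exact hC this
  have hZcl : IsClosed {z : M | F z = 0} :=
    isClosed_eq F.contMDiff.continuous continuous_const
  have hZcpt : IsCompact {z : M | F z = 0} := (hp C).of_isClosed_subset hZcl hZsub
  -- cover the zero set by finitely many nonvanishing sets
  have hcover : {z : M | F z = 0} ⊆ ⋃ z : M, {w : M | g z w ≠ 0} := by
    intro z _
    exact Set.mem_iUnion.2 ⟨z, hgz z⟩
  obtain ⟨t, ht⟩ := hZcpt.elim_finite_subcover (fun z : M => {w : M | g z w ≠ 0})
    (fun z => isOpen_compl_iff.2 (isClosed_eq (g z).contMDiff.continuous continuous_const))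
    hcover
  -- a positive element of `I`
  set h : SmoothFns m M := F * F + ∑ z ∈ t, g z * g z
  have hhI : h ∈ I := by
    refine Ideal.add_mem I (Ideal.mul_mem_left I F hFI) ?_
    exact Ideal.sum_mem I fun z _ => Ideal.mul_mem_left I (g z) (hgI z)
  have hval : ∀ w, h w = F w * F w + ∑ z ∈ t, g z w * g z w := by
    intro w
    show myEvalAlgHom w h = _
    simp only [h, map_add, map_mul, map_sum, myEvalAlgHom_apply]
  have hpos : ∀ w, 0 < h w := by
    intro w
    rw [hval w]
    have hsq : ∀ z : M, 0 ≤ g z w * g z w := fun z => mul_self_nonneg _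
    by_cases hw : F w = 0
    · obtain ⟨z, hzt, hzw⟩ := Set.mem_iUnion₂.1 (ht hw)
      have h1 : 0 < g z w * g z w := mul_self_pos.2 hzw
      have h2 : 0 < ∑ z ∈ t, g z w * g z w :=
        Finset.sum_pos' (fun z _ => hsq z) ⟨z, hzt, h1⟩
      nlinarith [mul_self_nonneg (F w)]
    · have h1 : 0 < F w * F w := mul_self_pos.2 hw
      have h2 : 0 ≤ ∑ z ∈ t, g z w * g z w := Finset.sum_nonneg fun z _ => hsq z
      linarith
  exact hI (my_ideal_eq_top_of_pos I h hhI hpos)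

set_option maxHeartbeats 1000000 in
/-- The spectrum is a subsingleton when the quotient has no nontrivial idempotents. -/
lemma my_spec_subsingleton (I : Ideal (SmoothFns m M)) 
    (hfd : FiniteDimensional ℝ (SmoothFns m M ⧸ I))
    (hidem : ∀ e : SmoothFns m M ⧸ I, e * e = e → e = 0 ∨ e = 1)
    {x y : M} (hx : x ∈ idealSpec I) (hy : y ∈ idealSpec I) : x = y := by
  by_contra hxy
  haveI : LocallyCompactSpace M :=
    ChartedSpace.locallyCompactSpace (EuclideanSpace ℝ (Fin m)) M
  haveI : SigmaCompactSpace M := inferInstance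
  -- a smooth function which is 0 at y and 1 at x
  obtain ⟨e, he0, he1, -⟩ := exists_contMDiffMap_zero_one_of_isClosed (𝓡 m) (n := (⊤ : ℕ∞))
    (isClosed_singleton (x := y)) (isClosed_singleton (x := x))
    (by simpa [Set.disjoint_singleton] using (Ne.symm hxy))
  have hey : e y = 0 := he0 rfl
  have hex : e x = 1 := he1 rfl
  set π : SmoothFns m M →ₐ[ℝ] (SmoothFns m M ⧸ I) := Ideal.Quotient.mkₐ ℝ I
  set a : SmoothFns m M ⧸ I := π e
  -- the chain of ideals (a^k) stabilizes
  haveI : IsArtinian ℝ (SmoothFns m M ⧸ I) := inferInstance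
  obtain ⟨N, hN⟩ := IsArtinian.monotone_stabilizes
    (⟨fun k => (Ideal.span {a ^ (k + 1)}).restrictScalars ℝ, by
      intro j k hjk
      have hsp : Ideal.span {a ^ (k + 1)} ≤ Ideal.span {a ^ (j + 1)} :=
        Ideal.span_singleton_le_span_singleton.2
          (pow_dvd_pow a (Nat.add_le_add_right hjk 1))
      exact fun u hu => hsp hu⟩ : ℕ →o (Submodule ℝ (SmoothFns m M ⧸ I))ᵒᵈ)
  set k : ℕ := N + 1
  have heq : Ideal.span {a ^ (k + 1)} = Ideal.span {a ^ k} := by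
    have := hN (N + 1) (Nat.le_succ N)
    have h2 : (Ideal.span {a ^ (N + 1)}).restrictScalars ℝ
        = (Ideal.span {a ^ (N + 2)}).restrictScalars ℝ := this
    have h3 : Ideal.span {a ^ (N + 1)} = Ideal.span {a ^ (N + 2)} :=
      Submodule.restrictScalars_injective ℝ _ _ h2
    simpa [k, show N + 1 + 1 = N + 2 from rfl] using h3.symm
  have hmemk : a ^ k ∈ Ideal.span {a ^ (k + 1)} := by
    rw [heq]; exact Ideal.mem_span_singleton_self _
  obtain ⟨b, hb⟩ := Ideal.mem_span_singleton'.1 hmemk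
  have hk' : a ^ k = b * a ^ (k + 1) := hb.symm
  have key : ∀ j : ℕ, a ^ k = b ^ j * a ^ (k + j) := by
    intro j
    induction j with
    | zero => simp
    | succ j ih =>
      calc a ^ k = b ^ j * a ^ (k + j) := ih
        _ = b ^ j * (a ^ k * a ^ j) := by rw [pow_add]
        _ = b ^ j * (b * a ^ (k + 1) * a ^ j) := by rw [← hk']
        _ = b ^ (j + 1) * a ^ (k + (j + 1)) := by ring
  have hε : (b ^ k * a ^ k) * (b ^ k * a ^ k) = b ^ k * a ^ k := by
    have h2 : b ^ k * a ^ (k + k) = a ^ k := (key k).symm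
    calc (b ^ k * a ^ k) * (b ^ k * a ^ k)
        = b ^ k * (b ^ k * a ^ (k + k)) := by rw [pow_add]; ring
      _ = b ^ k * a ^ k := by rw [h2]
  rcases hidem _ hε with hε0 | hε1
  · -- ε = 0 : then a ^ k = 0, i.e. e ^ k ∈ I, contradicting e x = 1
    have ha : a ^ k = (b ^ k * a ^ k) * a ^ k := by
      calc a ^ k = b ^ k * a ^ (k + k) := key k
        _ = (b ^ k * a ^ k) * a ^ k := by rw [pow_add]; ring
    rw [hε0, zero_mul] at ha
    have hek : e ^ k ∈ I := by
      apply Ideal.Quotient.eq_zero_iff_mem.1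
      have h5 : π (e ^ k) = 0 := by rw [map_pow]; exact ha
      exact h5
    have := hx (e ^ k) hek
    have hval : (e ^ k) x = (e x) ^ k := map_pow (myEvalAlgHom x) e k
    rw [hval, hex, one_pow] at this
    exact one_ne_zero this
  · -- ε = 1 : then d ^ k * e ^ k - 1 ∈ I, contradicting e y = 0
    obtain ⟨d, hd⟩ := Ideal.Quotient.mkₐ_surjective ℝ I b
    have hmem : d ^ k * e ^ k - 1 ∈ I := by
      have this : π (d ^ k * e ^ k - 1) = 0 := by
        rw [map_sub, map_mul, map_pow, map_pow, map_one]
        show (π d) ^ k * a ^ k - 1 = 0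
        rw [hd, hε1, sub_self]
      exact Ideal.Quotient.eq_zero_iff_mem.1 this
    have := hy _ hmem
    have hval : (d ^ k * e ^ k - 1) y = (d y) ^ k * (e y) ^ k - 1 := by
      have h1 := map_sub (myEvalAlgHom y) (d ^ k * e ^ k) 1
      simp only [map_mul, map_pow, map_one, myEvalAlgHom_apply] at h1
      exact h1
    rw [hval, hey] at this
    have hk0 : (0 : ℝ) ^ k = 0 := zero_pow (Nat.succ_ne_zero N)
    rw [hk0] at this
    simp at this

/-- If `I` is a proper ideal of `R = C^∞(M,ℝ)` of finite codimension such
that the quotient algebra `R/I` has no idempotents other than `0` and `1`, then `spec I`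
consists of exactly one point. -/
theorem spec_singleton_of_no_nontrivial_idempotents
    [Nonempty M] (I : Ideal (SmoothFns m M)) (hI : I ≠ ⊤)
    (hfd : FiniteDimensional ℝ (SmoothFns m M ⧸ I))
    (hidem : ∀ e : SmoothFns m M ⧸ I, e * e = e → e = 0 ∨ e = 1) :
    ∃ x : M, idealSpec I = {x} := by
  obtain ⟨x, hx⟩ := my_spec_nonempty I hI hfd
  refine ⟨x, ?_⟩
  apply Set.eq_singleton_iff_unique_mem.2
  exact ⟨hx, fun z hz => my_spec_subsingleton I hfd hidem hz hx⟩
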